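/- Let G, H be finite simple graphs on n and m vertices respectively, let ℋ be a complex Hilbert space and let h_{v,x} ∈ ℋ (v ∈ V(G), x ∈ V(H)) satisfy: ⟨h_{v,x}, h_{v,y}⟩ = 0 for x ≠ y; Σ_x h_{v,x} = Σ_x h_{w,x} for all v, w; ‖Σ_x h_{v,x}‖ = 1; and ⟨h_{v,x}, h_{w,y}⟩ = 0 whenever (v,w) ∈ E(G) and (x,y) ∉ E(H). Set p(x,y|v,w) = ⟨h_{v,x}, h_{w,y}⟩ and let φ_p : M_n(ℂ) → M_m(ℂ) be the linear map with φ_p(E_{v,w}) = Σ_{x,y} p(x,y|v,w) E_{x,y}. Then φ_p maps the operator system S_G into the operator system S_H, i.e. φ_p(A) ∈ S_H for every A ∈ S_G. -/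

import Mathlib

open scoped InnerProductSpace

/-- The operator system of a graph `G` on `n` vertices:
`S_G = span{E_{v,w} : v = w or (v,w) ∈ E(G)} ⊆ M_n(ℂ)`. -/
noncomputable def graphOperatorSystem {n : ℕ} (G : SimpleGraph (Fin n)) :
    Submodule ℂ (Matrix (Fin n) (Fin n) ℂ) :=
  Submodule.span ℂ
    {A | ∃ v w : Fin n, (v = w ∨ G.Adj v w) ∧ A = Matrix.single v w 1}

/-- A matrix supported on the diagonal together with the edges of `Hg` lies in the
operator system of `Hg`. -/
lemma mem_opSys_of_support {m : ℕ} (Hg : SimpleGraph (Fin m))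
    (M : Matrix (Fin m) (Fin m) ℂ)
    (hM : ∀ x y, x ≠ y → ¬ Hg.Adj x y → M x y = 0) :
    M ∈ graphOperatorSystem Hg := by
  rw [Matrix.matrix_eq_sum_single M]
  refine Submodule.sum_mem _ fun x _ => Submodule.sum_mem _ fun y _ => ?_
  by_cases hxy : x = y ∨ Hg.Adj x y
  · have : Matrix.single x y (M x y) = (M x y) • Matrix.single x y 1 := by
      rw [Matrix.smul_single, smul_eq_mul, mul_one]
    rw [this]
    exact Submodule.smul_mem _ _ (Submodule.subset_span ⟨x, y, hxy, rfl⟩)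
  · push_neg at hxy
    rw [hM x y hxy.1 hxy.2]
    simp

/-- If `p(x,y|v,w) = ⟪h v x, h w y⟫` comes from a winning vectorial strategy for the
homomorphism game from `G` to `H`, then the associated completely positive map
`φ_p(E_{v,w}) = Σ_{x,y} p(x,y|v,w) E_{x,y}` maps the operator system `S_G` into `S_H`. -/
theorem phi_maps_opSystem_into_opSystem {n m : ℕ}
    (G : SimpleGraph (Fin n)) (Hg : SimpleGraph (Fin m))
    {H : Type} [NormedAddCommGroup H] [InnerProductSpace ℂ H] [CompleteSpace H]
    (h : Fin n → Fin m → H)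
    (horth : ∀ v : Fin n, ∀ x y : Fin m, x ≠ y → ⟪h v x, h v y⟫_ℂ = 0)
    (hsum : ∀ v w : Fin n, ∑ x, h v x = ∑ x, h w x)
    (hnorm : ∀ v : Fin n, ‖∑ x, h v x‖ = 1)
    (hwin : ∀ v w : Fin n, ∀ x y : Fin m, G.Adj v w → ¬ Hg.Adj x y →
      ⟪h v x, h w y⟫_ℂ = 0)
    (A : Matrix (Fin n) (Fin n) ℂ) (hA : A ∈ graphOperatorSystem G) :
    (Matrix.of fun x y : Fin m => ∑ v, ∑ w, ⟪h v x, h w y⟫_ℂ * A v w)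
      ∈ graphOperatorSystem Hg := by
  unfold graphOperatorSystem at hA
  induction hA using Submodule.span_induction with
  | mem B hB =>
      obtain ⟨v, w, hvw, rfl⟩ := hB
      refine mem_opSys_of_support Hg _ fun x y hxy hadj => ?_
      have key : (∑ v', ∑ w', ⟪h v' x, h w' y⟫_ℂ * Matrix.single v w 1 v' w')
          = ⟪h v x, h w y⟫_ℂ := by
        simp [Matrix.single, ite_and, mul_ite, Finset.sum_ite_eq]
      simp only [Matrix.of_apply, key]
      rcases hvw with rfl | hvw
      · exact horth v x y hxy
      · exact hwin v w x y hvw hadj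
  | zero =>
      have : (Matrix.of fun x y : Fin m => ∑ v, ∑ w, ⟪h v x, h w y⟫_ℂ * (0 : Matrix (Fin n) (Fin n) ℂ) v w)
          = 0 := by
        ext x y; simp
      rw [this]; exact Submodule.zero_mem _
  | add B C _ _ hB hC =>
      have : (Matrix.of fun x y : Fin m => ∑ v, ∑ w, ⟪h v x, h w y⟫_ℂ * (B + C) v w)
          = (Matrix.of fun x y : Fin m => ∑ v, ∑ w, ⟪h v x, h w y⟫_ℂ * B v w)
            + (Matrix.of fun x y : Fin m => ∑ v, ∑ w, ⟪h v x, h w y⟫_ℂ * C v w) := by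
        ext x y
        simp [Matrix.add_apply, mul_add, Finset.sum_add_distrib]
      rw [this]; exact Submodule.add_mem _ hB hC
  | smul c B _ hB =>
      have : (Matrix.of fun x y : Fin m => ∑ v, ∑ w, ⟪h v x, h w y⟫_ℂ * (c • B) v w)
          = c • (Matrix.of fun x y : Fin m => ∑ v, ∑ w, ⟪h v x, h w y⟫_ℂ * B v w) := by
        ext x y
        simp [Matrix.smul_apply, Finset.mul_sum, smul_eq_mul]
        congr 1; ext v; congr 1; ext w; ring
      rw [this]; exact Submodule.smul_mem _ _ hB
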